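/- arXiv:math/9610222 — 2 statements merged into one kernel-verified Lean document; each statement's English description precedes it below -/
import Mathlib

section
/- Let f be a Lorenz map with branches f_- : [P,0] → [P,Q] and f_+ : [0,Q] → [P,Q], both continuous and strictly increasing, with f(P)=P and f(Q)=Q. If f is trivial, i.e. f([P,0]) does not contain [P,0] or f([0,Q]) does not contain [0,Q], then every orbit of f converges to a fixed point of f. -/
open Set Filter

lemma key_conv (a b : ℝ) (g : ℝ → ℝ) (hc : ContinuousOn g (Icc a b))
    (hm : MonotoneOn g (Icc a b)) (u : ℕ → ℝ) (hu : ∀ n, u n ∈ Icc a b)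
    (hrec : ∀ n, u (n + 1) = g (u n)) :
    ∃ y ∈ Icc a b, g y = y ∧ Tendsto u atTop (nhds y) := by
  have fixed : ∀ y, y ∈ Icc a b → Tendsto u atTop (nhds y) → g y = y := by
    intro y hy ht
    have h1 : Tendsto (fun n => u (n + 1)) atTop (nhds y) :=
      ht.comp (tendsto_add_atTop_nat 1)
    have h2 : Tendsto (fun n => g (u n)) atTop (nhds (g y)) := by
      apply (hc y hy).tendsto.comp
      rw [tendsto_nhdsWithin_iff]
      exact ⟨ht, Eventually.of_forall hu⟩
    have h1' : Tendsto (fun n => g (u n)) atTop (nhds y) := by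
      simpa only [hrec] using h1
    exact tendsto_nhds_unique h2 h1'
  rcases le_total (u 0) (u 1) with h01 | h01
  · have hmono : Monotone u := by
      apply monotone_nat_of_le_succ
      intro n
      induction n with
      | zero => exact h01
      | succ n ih =>
        have h := hm (hu n) (hu (n + 1)) ih
        rwa [← hrec n, ← hrec (n + 1)] at h
    have hbdd : BddAbove (range u) := ⟨b, by rintro _ ⟨n, rfl⟩; exact (hu n).2⟩
    have ht : Tendsto u atTop (nhds (⨆ n, u n)) := tendsto_atTop_ciSup hmono hbdd
    have hy : (⨆ n, u n) ∈ Icc a b :=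
      ⟨le_trans (hu 0).1 (le_ciSup hbdd 0), ciSup_le fun n => (hu n).2⟩
    exact ⟨_, hy, fixed _ hy ht, ht⟩
  · have hanti : Antitone u := by
      apply antitone_nat_of_succ_le
      intro n
      induction n with
      | zero => exact h01
      | succ n ih =>
        have h := hm (hu (n + 1)) (hu n) ih
        rwa [← hrec n, ← hrec (n + 1)] at h
    have hbdd : BddBelow (range u) := ⟨a, by rintro _ ⟨n, rfl⟩; exact (hu n).1⟩
    have ht : Tendsto u atTop (nhds (⨅ n, u n)) := tendsto_atTop_ciInf hanti hbdd
    have hy : (⨅ n, u n) ∈ Icc a b :=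
      ⟨le_ciInf fun n => (hu n).1, le_trans (ciInf_le hbdd 0) (hu 0).2⟩
    exact ⟨_, hy, fixed _ hy ht, ht⟩

/-- **A trivial Lorenz map has all orbits converging to fixed points.**
If `(fm, fp)` is a Lorenz map on `[P,Q]` which is trivial, i.e. `fm([P,0]) ⊉ [P,0]` or
`fp([0,Q]) ⊉ [0,Q]`, then every orbit converges to a fixed point of (a branch of) the map. -/
theorem trivial_lorenz_orbits_converge
    (P Q : ℝ) (hP : P < 0) (hQ : 0 < Q) (fm fp : ℝ → ℝ)
    (hcm : ContinuousOn fm (Icc P 0)) (hcp : ContinuousOn fp (Icc 0 Q))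
    (hmm : StrictMonoOn fm (Icc P 0)) (hmp : StrictMonoOn fp (Icc 0 Q))
    (hmapm : MapsTo fm (Icc P 0) (Icc P Q)) (hmapp : MapsTo fp (Icc 0 Q) (Icc P Q))
    (hfixP : fm P = P) (hfixQ : fp Q = Q)
    (f : ℝ → ℝ) (hf : ∀ x, f x = if x < 0 then fm x else fp x)
    (htrivial : ¬ Icc P 0 ⊆ fm '' Icc P 0 ∨ ¬ Icc 0 Q ⊆ fp '' Icc 0 Q)
    (x : ℝ) (hx : x ∈ Icc P Q) :
    ∃ y : ℝ, (fm y = y ∨ fp y = y) ∧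
      Tendsto (fun n => f^[n] x) atTop (nhds y) := by
  set u : ℕ → ℝ := fun n => f^[n] x with hu_def
  have hu0 : u 0 = x := rfl
  have husucc : ∀ n, u (n + 1) = f (u n) := fun n => Function.iterate_succ_apply' f n x
  -- orbit stays in [P,Q]
  have hinv : ∀ z ∈ Icc P Q, f z ∈ Icc P Q := by
    intro z hz
    rw [hf]
    split_ifs with h
    · exact hmapm ⟨hz.1, h.le⟩
    · exact hmapp ⟨not_lt.mp h, hz.2⟩
  have hu : ∀ n, u n ∈ Icc P Q := by
    intro n
    induction n with
    | zero => exact hx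
    | succ n ih => rw [husucc]; exact hinv _ ih
  -- triviality gives fm 0 < 0 or 0 < fp 0
  have htriv : fm 0 < 0 ∨ 0 < fp 0 := by
    rcases htrivial with h | h
    · left
      by_contra h0
      push_neg at h0
      exact h (fun z hz => intermediate_value_Icc hP.le hcm
        (by rw [hfixP]; exact ⟨hz.1, hz.2.trans h0⟩))
    · right
      by_contra h0
      push_neg at h0
      exact h (fun z hz => intermediate_value_Icc hQ.le hcp
        (by rw [hfixQ]; exact ⟨h0.trans hz.1, hz.2⟩))
  rcases htriv with hA | hB
  · -- fm 0 < 0 : once negative, stay negative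
    by_cases hall : ∀ n, 0 ≤ u n
    · obtain ⟨y, hy, hfix, ht⟩ := key_conv 0 Q fp hcp hmp.monotoneOn u
        (fun n => ⟨hall n, (hu n).2⟩)
        (fun n => by rw [husucc, hf]; rw [if_neg (not_lt.mpr (hall n))])
      exact ⟨y, Or.inr hfix, ht⟩
    · push_neg at hall
      obtain ⟨N, hN⟩ := hall
      have hneg : ∀ k, u (N + k) < 0 := by
        intro k
        induction k with
        | zero => simpa using hN
        | succ k ih =>
          have hrec : u (N + (k + 1)) = fm (u (N + k)) := by
            rw [← Nat.add_assoc, husucc, hf, if_pos ih]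
          rw [hrec]
          calc fm (u (N + k)) ≤ fm 0 :=
                hmm.monotoneOn ⟨(hu _).1, ih.le⟩ ⟨hP.le, le_rfl⟩ ih.le
            _ < 0 := hA
      obtain ⟨y, hy, hfix, ht⟩ := key_conv P 0 fm hcm hmm.monotoneOn
        (fun k => u (N + k))
        (fun k => ⟨(hu _).1, (hneg k).le⟩)
        (fun k => by show u (N + (k + 1)) = fm (u (N + k)); rw [← Nat.add_assoc, husucc, hf, if_pos (hneg k)])
      refine ⟨y, Or.inl hfix, ?_⟩
      have ht' : Tendsto (fun k => u (k + N)) atTop (nhds y) := by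
        simpa [Nat.add_comm] using ht
      exact (tendsto_add_atTop_iff_nat N).mp ht'
  · -- 0 < fp 0 : once nonnegative, stay nonnegative
    by_cases hall : ∀ n, u n < 0
    · obtain ⟨y, hy, hfix, ht⟩ := key_conv P 0 fm hcm hmm.monotoneOn u
        (fun n => ⟨(hu n).1, (hall n).le⟩)
        (fun n => by rw [husucc, hf, if_pos (hall n)])
      exact ⟨y, Or.inl hfix, ht⟩
    · push_neg at hall
      obtain ⟨N, hN⟩ := hall
      have hpos : ∀ k, 0 ≤ u (N + k) := by
        intro k
        induction k with
        | zero => simpa using hN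
        | succ k ih =>
          have hrec : u (N + (k + 1)) = fp (u (N + k)) := by
            rw [← Nat.add_assoc, husucc, hf, if_neg (not_lt.mpr ih)]
          rw [hrec]
          calc (0:ℝ) ≤ fp 0 := hB.le
            _ ≤ fp (u (N + k)) :=
                hmp.monotoneOn ⟨le_rfl, hQ.le⟩ ⟨ih, (hu _).2⟩ ih
      obtain ⟨y, hy, hfix, ht⟩ := key_conv 0 Q fp hcp hmp.monotoneOn
        (fun k => u (N + k))
        (fun k => ⟨hpos k, (hu _).2⟩)
        (fun k => by show u (N + (k + 1)) = fp (u (N + k)); rw [← Nat.add_assoc, husucc, hf, if_neg (not_lt.mpr (hpos k))])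
      refine ⟨y, Or.inr hfix, ?_⟩
      have ht' : Tendsto (fun k => u (k + N)) atTop (nhds y) := by
        simpa [Nat.add_comm] using ht
      exact (tendsto_add_atTop_iff_nat N).mp ht'
end

section
/- Let f and g be Lorenz maps with equal kneading sequences up to length n and matching vanishing of critical orbits up to time n, and let h be the combinatorial homeomorphism matching branches of f^k to branches of g^k for k ≤ n. Then for every k ≤ n and every branch I of f^k, the cutting times agree: l_k(I,f) = l_k(h(I),g) and r_k(I,f) = r_k(h(I),g), where l_k(I,f) is the unique time with 0 = sup f^{l_k}(I) and r_k(I,f) the unique time with 0 = inf f^{r_k}(I). -/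
open Set Filter

noncomputable section

/-- The full Lorenz map glued from the two branches (left branch on `x < 0`). -/
def lorenzGlue (fm fp : ℝ → ℝ) : ℝ → ℝ := fun x => if x < 0 then fm x else fp x

/-- `(fm, fp)` is a Lorenz map on `[-1,1]`: continuous strictly increasing branches,
mapping into `[-1,1]`, fixing the endpoints `±1`. -/
def IsLorenzPair (fm fp : ℝ → ℝ) : Prop :=
  ContinuousOn fm (Icc (-1) 0) ∧ ContinuousOn fp (Icc 0 1) ∧
  StrictMonoOn fm (Icc (-1) 0) ∧ StrictMonoOn fp (Icc 0 1) ∧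
  MapsTo fm (Icc (-1) 0) (Icc (-1) 1) ∧ MapsTo fp (Icc 0 1) (Icc (-1) 1) ∧
  fm (-1) = -1 ∧ fp 1 = 1

/-- No point of `S` is mapped to the critical point `0` by `f^[i]` for `i < n`;
this is the combinatorial meaning of "`f^n` is monotone on `S`". -/
def noCut (f : ℝ → ℝ) (n : ℕ) (S : Set ℝ) : Prop :=
  ∀ x ∈ S, ∀ i < n, f^[i] x ≠ 0

/-- `[a,b]` is a branch of `f^n`: a maximal closed interval in `[-1,1]` on whose
interior `f^n` is monotone (no cut point of order `< n`). -/
def IsBranch (f : ℝ → ℝ) (n : ℕ) (a b : ℝ) : Prop :=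
  -1 ≤ a ∧ a < b ∧ b ≤ 1 ∧ noCut f n (Ioo a b) ∧
  ∀ a' b' : ℝ, -1 ≤ a' → b' ≤ 1 → a' ≤ a → b ≤ b' → noCut f n (Ioo a' b') → a' = a ∧ b' = b

/-- The word `w ∈ {L,R}^n` (here `false = L`, `true = R`) is the itinerary word
of the interval `(a,b)` for `f^n`. -/
def HasWord (f : ℝ → ℝ) (n : ℕ) (a b : ℝ) (w : ℕ → Bool) : Prop :=
  ∀ i < n, (w i = false → f^[i] '' Ioo a b ⊆ Ico (-1) 0) ∧
           (w i = true → f^[i] '' Ioo a b ⊆ Ioc 0 1)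

/-- `critNeg fm fp n = f^n(0_-)`, the `n`-th left critical value. -/
def critNeg (fm fp : ℝ → ℝ) : ℕ → ℝ
  | 0 => 0
  | n + 1 => (lorenzGlue fm fp)^[n] (fm 0)

/-- `critPos fm fp n = f^n(0_+)`, the `n`-th right critical value. -/
def critPos (fm fp : ℝ → ℝ) : ℕ → ℝ
  | 0 => 0
  | n + 1 => (lorenzGlue fm fp)^[n] (fp 0)

/-- `[a,b]` is a homterval of `f`: a maximal nondegenerate closed interval on whose
interior every iterate of `f` is monotone. -/
def IsHomterval (f : ℝ → ℝ) (a b : ℝ) : Prop :=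
  -1 ≤ a ∧ a < b ∧ b ≤ 1 ∧ (∀ n, noCut f n (Ioo a b)) ∧
  ∀ a' b' : ℝ, -1 ≤ a' → b' ≤ 1 → a' ≤ a → b ≤ b' → (∀ n, noCut f n (Ioo a' b')) →
    a' = a ∧ b' = b

/-- `(p,q,f^a,f^b)` is a renormalization of the Lorenz map `(fm,fp)` : `p < 0 < q`
are periodic of periods `a`, `b`, `f^a`, `f^b` are monotone on `(p,0)`, `(0,q)` and map
them into `[p,q]`, and the induced map is the first return map to `(p,q)`. -/
def IsRenorm (fm fp : ℝ → ℝ) (p q : ℝ) (a b : ℕ) : Prop :=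
  -1 ≤ p ∧ p < 0 ∧ 0 < q ∧ q ≤ 1 ∧ 0 < a ∧ 0 < b ∧
  (lorenzGlue fm fp)^[a] p = p ∧ (lorenzGlue fm fp)^[b] q = q ∧
  noCut (lorenzGlue fm fp) a (Ioo p 0) ∧ noCut (lorenzGlue fm fp) b (Ioo 0 q) ∧
  MapsTo ((lorenzGlue fm fp)^[a]) (Ico p 0) (Icc p q) ∧
  MapsTo ((lorenzGlue fm fp)^[b]) (Ioc 0 q) (Icc p q) ∧
  (∀ x ∈ Ioo p 0, ∀ i, 0 < i → i < a → (lorenzGlue fm fp)^[i] x ∉ Ioo p q) ∧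
  (∀ x ∈ Ioo 0 q, ∀ i, 0 < i → i < b → (lorenzGlue fm fp)^[i] x ∉ Ioo p q)

/-- The renormalization on `(p,q)` with periods `(a,b)` has combinatorial type `(α,β)`:
`α` resp. `β` is the itinerary word of the branch containing `(p,0)` resp. `(0,q)`. -/
def RenormType (f : ℝ → ℝ) (p q : ℝ) (a b : ℕ) (α β : ℕ → Bool) : Prop :=
  (∀ i < a, (α i = false → f^[i] '' Ioo p 0 ⊆ Ico (-1) 0) ∧
            (α i = true → f^[i] '' Ioo p 0 ⊆ Ioc 0 1)) ∧
  (∀ i < b, (β i = false → f^[i] '' Ioo 0 q ⊆ Ico (-1) 0) ∧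
            (β i = true → f^[i] '' Ioo 0 q ⊆ Ioc 0 1))

/-- Membership in the domain of renormalization `D_{α,β}`. -/
def InDomain (fm fp : ℝ → ℝ) (a b : ℕ) (α β : ℕ → Bool) : Prop :=
  ∃ p q : ℝ, IsRenorm fm fp p q a b ∧ RenormType (lorenzGlue fm fp) p q a b α β

namespace LorenzAux

variable {fm fp : ℝ → ℝ} {x : ℝ}

lemma glue_neg (h : x < 0) : lorenzGlue fm fp x = fm x := if_pos h

lemma glue_nonneg (h : 0 ≤ x) : lorenzGlue fm fp x = fp x := if_neg (not_lt.2 h)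

lemma glue_mapsTo (hF : IsLorenzPair fm fp) :
    MapsTo (lorenzGlue fm fp) (Icc (-1) 1) (Icc (-1) 1) := by
  intro x hx
  by_cases hx0 : x < 0
  · rw [glue_neg hx0]; exact hF.2.2.2.2.1 ⟨hx.1, hx0.le⟩
  · rw [glue_nonneg (not_lt.1 hx0)]; exact hF.2.2.2.2.2.1 ⟨not_lt.1 hx0, hx.2⟩

lemma iter_mapsTo (hF : IsLorenzPair fm fp) (i : ℕ) :
    MapsTo ((lorenzGlue fm fp)^[i]) (Icc (-1) 1) (Icc (-1) 1) := by
  induction i with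
  | zero => simp [MapsTo]
  | succ i ih =>
    intro x hx
    rw [Function.iterate_succ_apply']
    exact glue_mapsTo hF (ih hx)

/-- LUB transport under a monotone continuous map. -/
lemma isLUB_image_mono {φ : ℝ → ℝ} {c d u : ℝ} {S : Set ℝ}
    (hc : ContinuousOn φ (Icc c d)) (hm : MonotoneOn φ (Icc c d))
    (hS : S ⊆ Icc c d) (hne : S.Nonempty) (hu : IsLUB S u) (huI : u ∈ Icc c d) :
    IsLUB (φ '' S) (φ u) := by
  constructor
  · rintro _ ⟨x, hx, rfl⟩
    exact hm (hS hx) huI (hu.1 hx)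
  · intro v hv
    by_contra hlt
    push_neg at hlt
    rcases em (u ∈ S) with h | h
    · exact absurd (hv ⟨u, h, rfl⟩) (not_le.2 hlt)
    · have hcl : u ∈ closure S := hu.mem_closure hne
      haveI : (nhdsWithin u S).NeBot := mem_closure_iff_nhdsWithin_neBot.1 hcl
      have hev : φ ⁻¹' Ioi v ∈ nhdsWithin u (Icc c d) := (hc u huI) (Ioi_mem_nhds hlt)
      have hev' : φ ⁻¹' Ioi v ∈ nhdsWithin u S := nhdsWithin_mono u hS hev
      obtain ⟨x, hx1, hx2⟩ := Filter.nonempty_of_mem (inter_mem hev' self_mem_nhdsWithin)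
      exact absurd (hv ⟨x, hx2, rfl⟩) (not_le.2 hx1)

/-- GLB transport under a monotone continuous map. -/
lemma isGLB_image_mono {φ : ℝ → ℝ} {c d u : ℝ} {S : Set ℝ}
    (hc : ContinuousOn φ (Icc c d)) (hm : MonotoneOn φ (Icc c d))
    (hS : S ⊆ Icc c d) (hne : S.Nonempty) (hu : IsGLB S u) (huI : u ∈ Icc c d) :
    IsGLB (φ '' S) (φ u) := by
  constructor
  · rintro _ ⟨x, hx, rfl⟩
    exact hm huI (hS hx) (hu.1 hx)
  · intro v hv
    by_contra hlt
    push_neg at hlt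
    rcases em (u ∈ S) with h | h
    · exact absurd (hv ⟨u, h, rfl⟩) (not_le.2 hlt)
    · have hcl : u ∈ closure S := hu.mem_closure hne
      haveI : (nhdsWithin u S).NeBot := mem_closure_iff_nhdsWithin_neBot.1 hcl
      have hev : φ ⁻¹' Iio v ∈ nhdsWithin u (Icc c d) := (hc u huI) (Iio_mem_nhds hlt)
      have hev' : φ ⁻¹' Iio v ∈ nhdsWithin u S := nhdsWithin_mono u hS hev
      obtain ⟨x, hx1, hx2⟩ := Filter.nonempty_of_mem (inter_mem hev' self_mem_nhdsWithin)
      exact absurd (hv ⟨x, hx2, rfl⟩) (not_le.2 hx1)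



/-- Every interval of monotonicity has an itinerary word. -/
lemma exists_word (hF : IsLorenzPair fm fp) {k : ℕ} {a b : ℝ}
    (ha : -1 ≤ a) (hab : a < b) (hb : b ≤ 1) (hk : 0 < k)
    (hnc : noCut (lorenzGlue fm fp) k (Ioo a b)) :
    ∃ w : ℕ → Bool, HasWord (lorenzGlue fm fp) k a b w := by
  classical
  set f := lorenzGlue fm fp with hf
  have key : ∀ i, i < k → (f^[i] '' Ioo a b ⊆ Ico (-1) 0 ∨ f^[i] '' Ioo a b ⊆ Ioc 0 1)
      ∧ IsPreconnected (f^[i] '' Ioo a b) := by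
    intro i
    induction i with
    | zero =>
      intro _
      constructor
      · simp only [Function.iterate_zero, image_id]
        have h0 : (0:ℝ) ∉ Ioo a b := fun h0 => hnc 0 h0 0 hk rfl
        rcases le_or_gt b 0 with hb0 | hb0
        · exact Or.inl (fun x hx => ⟨le_trans ha hx.1.le, lt_of_lt_of_le hx.2 hb0⟩)
        · have ha0 : 0 ≤ a := by
            by_contra hc
            exact h0 ⟨not_le.1 hc, hb0⟩
          exact Or.inr (fun x hx => ⟨lt_of_le_of_lt ha0 hx.1, le_trans hx.2.le hb⟩)
      · simp only [Function.iterate_zero, image_id]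
        exact isPreconnected_Ioo
    | succ i ih =>
      intro hik
      obtain ⟨hside, hpre⟩ := ih (Nat.lt_of_succ_lt hik)
      have himg : f^[i+1] '' Ioo a b = f '' (f^[i] '' Ioo a b) := by
        rw [← image_comp]
        exact image_congr fun x _ => Function.iterate_succ_apply' f i x
      have hpre' : IsPreconnected (f^[i+1] '' Ioo a b) := by
        rw [himg]
        rcases hside with hL | hR
        · have : f '' (f^[i] '' Ioo a b) = fm '' (f^[i] '' Ioo a b) :=
            image_congr fun x hx => glue_neg (hL hx).2
          rw [this]
          exact hpre.image fm (hF.1.mono (fun x hx => ⟨(hL hx).1, (hL hx).2.le⟩))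
        · have : f '' (f^[i] '' Ioo a b) = fp '' (f^[i] '' Ioo a b) :=
            image_congr fun x hx => glue_nonneg (hR hx).1.le
          rw [this]
          exact hpre.image fp (hF.2.1.mono (fun x hx => ⟨(hR hx).1.le, (hR hx).2⟩))
      have hsub : f^[i+1] '' Ioo a b ⊆ Icc (-1) 1 := by
        rw [himg]
        rcases hside with hL | hR
        · rintro _ ⟨y, hy, rfl⟩
          rw [hf, glue_neg (hL hy).2]
          exact hF.2.2.2.2.1 ⟨(hL hy).1, (hL hy).2.le⟩
        · rintro _ ⟨y, hy, rfl⟩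
          rw [hf, glue_nonneg (hR hy).1.le]
          exact hF.2.2.2.2.2.1 ⟨(hR hy).1.le, (hR hy).2⟩
      have h0 : (0:ℝ) ∉ f^[i+1] '' Ioo a b := by
        rintro ⟨x, hx, hx0⟩
        exact hnc x hx (i+1) hik hx0
      refine ⟨?_, hpre'⟩
      by_cases hneg : ∃ u ∈ f^[i+1] '' Ioo a b, u < 0
      · obtain ⟨u, hu, hu0⟩ := hneg
        left
        intro v hv
        refine ⟨(hsub hv).1, ?_⟩
        rcases lt_trichotomy v 0 with h | h | h
        · exact h
        · exact absurd (h ▸ hv) h0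
        · exact absurd (hpre'.Icc_subset hu hv ⟨hu0.le, h.le⟩) h0
      · push_neg at hneg
        right
        intro v hv
        refine ⟨?_, (hsub hv).2⟩
        rcases lt_trichotomy 0 v with h | h | h
        · exact h
        · exact absurd (h ▸ hv) h0
        · exact absurd h (not_lt.2 (hneg v hv))
  refine ⟨fun i => if (f^[i] '' Ioo a b ⊆ Ico (-1) 0) then false else true, ?_⟩
  intro i hik
  constructor
  · intro hw
    by_cases hc : f^[i] '' Ioo a b ⊆ Ico (-1) 0
    · exact hc
    · simp [hc] at hw
  · intro hw
    by_cases hc : f^[i] '' Ioo a b ⊆ Ico (-1) 0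
    · simp [hc] at hw
    · exact ((key i hik).1.resolve_left hc)

/-- The symbolic orbit of `x` driven by the word `w`. -/
def lseq (fm fp : ℝ → ℝ) (w : ℕ → Bool) (x : ℝ) : ℕ → ℝ
  | 0 => x
  | i + 1 => (if w i then fp else fm) (lseq fm fp w x i)

variable {w : ℕ → Bool} {k : ℕ} {a b : ℝ}

/-- The sup and inf of the images of a monotonicity interval follow the symbolic orbits
of the endpoints. -/
lemma seq_isLUB (hF : IsLorenzPair fm fp)
    (ha : -1 ≤ a) (hab : a < b) (hb : b ≤ 1)
    (hw : HasWord (lorenzGlue fm fp) k a b w) :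
    ∀ i < k, IsLUB ((lorenzGlue fm fp)^[i] '' Ioo a b) (lseq fm fp w b i) ∧
             IsGLB ((lorenzGlue fm fp)^[i] '' Ioo a b) (lseq fm fp w a i) := by
  set f := lorenzGlue fm fp with hf
  intro i
  induction i with
  | zero =>
    intro _
    simp only [Function.iterate_zero, image_id, lseq]
    exact ⟨isLUB_Ioo hab, isGLB_Ioo hab⟩
  | succ i ih =>
    intro hik
    obtain ⟨hM, hN⟩ := ih (Nat.lt_of_succ_lt hik)
    have hne : (f^[i] '' Ioo a b).Nonempty := (nonempty_Ioo.2 hab).image _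
    have himg : f^[i+1] '' Ioo a b = f '' (f^[i] '' Ioo a b) := by
      rw [← image_comp]
      exact image_congr fun x _ => Function.iterate_succ_apply' f i x
    obtain ⟨x0, hx0⟩ := hne
    have hne : (f^[i] '' Ioo a b).Nonempty := ⟨x0, hx0⟩
    rcases Bool.eq_false_or_eq_true (w i) with hwi | hwi
    · have hR : f^[i] '' Ioo a b ⊆ Ioc 0 1 := (hw i (Nat.lt_of_succ_lt hik)).2 hwi
      have hsub : f^[i] '' Ioo a b ⊆ Icc 0 1 := fun x hx => ⟨(hR hx).1.le, (hR hx).2⟩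
      have hMI : lseq fm fp w b i ∈ Icc 0 1 :=
        ⟨le_trans (hsub hx0).1 (hM.1 hx0), hM.2 (fun x hx => (hsub hx).2)⟩
      have hNI : lseq fm fp w a i ∈ Icc 0 1 :=
        ⟨hN.2 (fun x hx => (hsub hx).1), le_trans (hN.1 hx0) (hsub hx0).2⟩
      have himg2 : f '' (f^[i] '' Ioo a b) = fp '' (f^[i] '' Ioo a b) := by
        refine image_congr fun x hx => ?_
        rw [hf]; exact glue_nonneg (hR hx).1.le
      simp only [lseq, hwi, if_pos, himg, himg2]
      exact ⟨isLUB_image_mono hF.2.1 hF.2.2.2.1.monotoneOn hsub hne hM hMI,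
             isGLB_image_mono hF.2.1 hF.2.2.2.1.monotoneOn hsub hne hN hNI⟩
    · have hL : f^[i] '' Ioo a b ⊆ Ico (-1) 0 := (hw i (Nat.lt_of_succ_lt hik)).1 hwi
      have hsub : f^[i] '' Ioo a b ⊆ Icc (-1) 0 := fun x hx => ⟨(hL hx).1, (hL hx).2.le⟩
      have hMI : lseq fm fp w b i ∈ Icc (-1) 0 :=
        ⟨le_trans (hsub hx0).1 (hM.1 hx0), hM.2 (fun x hx => (hL hx).2.le)⟩
      have hNI : lseq fm fp w a i ∈ Icc (-1) 0 :=
        ⟨hN.2 (fun x hx => (hsub hx).1), le_trans (hN.1 hx0) (hsub hx0).2⟩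
      have himg2 : f '' (f^[i] '' Ioo a b) = fm '' (f^[i] '' Ioo a b) := by
        refine image_congr fun x hx => ?_
        rw [hf]; exact glue_neg (hL hx).2
      simp only [lseq, hwi, Bool.false_eq_true, if_false, himg, himg2]
      exact ⟨isLUB_image_mono hF.1 hF.2.2.1.monotoneOn hsub hne hM hMI,
             isGLB_image_mono hF.1 hF.2.2.1.monotoneOn hsub hne hN hNI⟩

/-- Sign of the symbolic sup-orbit matches the word. -/
lemma seq_sign_sup (hF : IsLorenzPair fm fp)
    (ha : -1 ≤ a) (hab : a < b) (hb : b ≤ 1)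
    (hw : HasWord (lorenzGlue fm fp) k a b w) :
    ∀ i < k, (0 < lseq fm fp w b i ↔ w i = true) := by
  intro i hik
  obtain ⟨hM, _⟩ := seq_isLUB hF ha hab hb hw i hik
  obtain ⟨x0, hx0⟩ : ((lorenzGlue fm fp)^[i] '' Ioo a b).Nonempty := (nonempty_Ioo.2 hab).image _
  constructor
  · intro hpos
    rcases Bool.eq_false_or_eq_true (w i) with hwi | hwi
    · exact hwi
    · have hL := (hw i hik).1 hwi
      exact absurd hpos (not_lt.2 (hM.2 fun x hx => (hL hx).2.le))
  · intro hwi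
    exact lt_of_lt_of_le ((hw i hik).2 hwi hx0).1 (hM.1 hx0)

/-- Sign of the symbolic inf-orbit matches the word. -/
lemma seq_sign_inf (hF : IsLorenzPair fm fp)
    (ha : -1 ≤ a) (hab : a < b) (hb : b ≤ 1)
    (hw : HasWord (lorenzGlue fm fp) k a b w) :
    ∀ i < k, (lseq fm fp w a i < 0 ↔ w i = false) := by
  intro i hik
  obtain ⟨_, hN⟩ := seq_isLUB hF ha hab hb hw i hik
  obtain ⟨x0, hx0⟩ : ((lorenzGlue fm fp)^[i] '' Ioo a b).Nonempty := (nonempty_Ioo.2 hab).image _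
  constructor
  · intro hneg
    rcases Bool.eq_false_or_eq_true (w i) with hwi | hwi
    · have hR := (hw i hik).2 hwi
      exact absurd hneg (not_lt.2 (hN.2 fun x hx => (hR hx).1.le))
    · exact hwi
  · intro hwi
    exact lt_of_le_of_lt (hN.1 hx0) ((hw i hik).1 hwi hx0).2

/-- The symbolic sup-orbit equals the true orbit of `b` as long as it avoids `0`. -/
lemma orbit_eq_seq_sup (hF : IsLorenzPair fm fp)
    (ha : -1 ≤ a) (hab : a < b) (hb : b ≤ 1)
    (hw : HasWord (lorenzGlue fm fp) k a b w) :
    ∀ i ≤ k, (∀ j < i, lseq fm fp w b j ≠ 0) → (lorenzGlue fm fp)^[i] b = lseq fm fp w b i := by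
  intro i
  induction i with
  | zero => intro _ _; rfl
  | succ i ih =>
    intro hik hz
    have hik' : i < k := Nat.lt_of_succ_le hik
    have heq : (lorenzGlue fm fp)^[i] b = lseq fm fp w b i :=
      ih (Nat.le_of_succ_le hik) (fun j hj => hz j (Nat.lt_succ_of_lt hj))
    rw [Function.iterate_succ_apply', heq]
    have hzi : lseq fm fp w b i ≠ 0 := hz i (Nat.lt_succ_self i)
    rcases lt_trichotomy (lseq fm fp w b i) 0 with hlt | he | hgt
    · have hwi : w i = false := by
        rcases Bool.eq_false_or_eq_true (w i) with h | h
        · exact absurd ((seq_sign_sup hF ha hab hb hw i hik').2 h) (asymm hlt)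
        · exact h
      simp only [lseq, hwi, Bool.false_eq_true, if_false]
      exact glue_neg hlt
    · exact absurd he hzi
    · have hwi : w i = true := (seq_sign_sup hF ha hab hb hw i hik').1 hgt
      simp only [lseq, hwi, if_pos]
      exact glue_nonneg hgt.le

/-- The symbolic inf-orbit equals the true orbit of `a` (zeros continue with `fp`, as does
the glued map). -/
lemma orbit_eq_seq_inf (hF : IsLorenzPair fm fp)
    (ha : -1 ≤ a) (hab : a < b) (hb : b ≤ 1)
    (hw : HasWord (lorenzGlue fm fp) k a b w) :
    ∀ i ≤ k, (lorenzGlue fm fp)^[i] a = lseq fm fp w a i := by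
  intro i
  induction i with
  | zero => intro _; rfl
  | succ i ih =>
    intro hik
    have hik' : i < k := Nat.lt_of_succ_le hik
    rw [Function.iterate_succ_apply', ih (Nat.le_of_succ_le hik)]
    rcases lt_trichotomy (lseq fm fp w a i) 0 with hlt | he | hgt
    · have hwi : w i = false := (seq_sign_inf hF ha hab hb hw i hik').1 hlt
      simp only [lseq, hwi, Bool.false_eq_true, if_false]
      exact glue_neg hlt
    · have hwi : w i = true := by
        rcases Bool.eq_false_or_eq_true (w i) with h | h
        · exact h
        · exact absurd ((seq_sign_inf hF ha hab hb hw i hik').2 h) (by rw [he]; exact lt_irrefl 0)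
      simp only [lseq, hwi, if_pos]
      exact glue_nonneg he.ge
    · have hwi : w i = true := by
        rcases Bool.eq_false_or_eq_true (w i) with h | h
        · exact h
        · exact absurd ((seq_sign_inf hF ha hab hb hw i hik').2 h) (asymm hgt)
      simp only [lseq, hwi, if_pos]
      exact glue_nonneg hgt.le

/-- The set of cut points of order `< k`. -/
def cutSet (f : ℝ → ℝ) (k : ℕ) : Set ℝ := {x ∈ Icc (-1) 1 | ∃ i < k, f^[i] x = 0}

lemma cutSet_finite (hF : IsLorenzPair fm fp) (k : ℕ) :
    (cutSet (lorenzGlue fm fp) k).Finite := by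
  induction k with
  | zero =>
    have : cutSet (lorenzGlue fm fp) 0 = ∅ := by
      ext x; simp [cutSet]
    simp [this]
  | succ k ih =>
    set f := lorenzGlue fm fp with hf
    have hsub : cutSet f (k+1) ⊆ {0} ∪ {x ∈ Icc (-1) 1 | f x ∈ cutSet f k} := by
      rintro x ⟨hx, i, hik, hx0⟩
      rcases Nat.eq_zero_or_pos i with rfl | hi
      · left; simpa using hx0
      · right
        obtain ⟨j, rfl⟩ := Nat.exists_eq_succ_of_ne_zero hi.ne'
        refine ⟨hx, glue_mapsTo hF hx, j, Nat.lt_of_succ_lt_succ hik, ?_⟩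
        rwa [Function.iterate_succ_apply] at hx0
    refine Set.Finite.subset (Set.Finite.union (finite_singleton 0) ?_) hsub
    have hfib : ∀ y : ℝ, {x ∈ Icc (-1) 1 | f x = y}.Finite := by
      intro y
      have hsub2 : {x ∈ Icc (-1) 1 | f x = y} ⊆
          {x ∈ Icc (-1) 0 | fm x = y} ∪ {x ∈ Icc 0 1 | fp x = y} := by
        rintro x ⟨hx, hxy⟩
        by_cases hx0 : x < 0
        · left; exact ⟨⟨hx.1, hx0.le⟩, by rwa [hf, glue_neg hx0] at hxy⟩
        · right; exact ⟨⟨not_lt.1 hx0, hx.2⟩, by rwa [hf, glue_nonneg (not_lt.1 hx0)] at hxy⟩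
      refine Set.Finite.subset (Set.Finite.union ?_ ?_) hsub2
      · refine Set.Subsingleton.finite fun x1 h1 x2 h2 => ?_
        exact hF.2.2.1.injOn h1.1 h2.1 (h1.2.trans h2.2.symm)
      · refine Set.Subsingleton.finite fun x1 h1 x2 h2 => ?_
        exact hF.2.2.2.1.injOn h1.1 h2.1 (h1.2.trans h2.2.symm)
    have : {x ∈ Icc (-1) 1 | f x ∈ cutSet f k} ⊆ ⋃ y ∈ cutSet f k, {x ∈ Icc (-1) 1 | f x = y} := by
      rintro x ⟨hx, hfx⟩
      exact mem_biUnion hfx ⟨hx, rfl⟩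
    exact Set.Finite.subset (Set.Finite.biUnion ih fun y _ => hfib y) this

/-- Any interval of monotonicity extends to a maximal one (a branch), whose endpoints
are cut points unless they are `±1`. -/
lemma extend_branch (hF : IsLorenzPair fm fp) {k : ℕ} {a b : ℝ}
    (ha : -1 ≤ a) (hab : a < b) (hb : b ≤ 1)
    (hnc : noCut (lorenzGlue fm fp) k (Ioo a b)) :
    ∃ a₁ b₁ : ℝ, a₁ ≤ a ∧ b ≤ b₁ ∧ IsBranch (lorenzGlue fm fp) k a₁ b₁ ∧
      ((∃ i < k, (lorenzGlue fm fp)^[i] b = 0) → b₁ = b) ∧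
      (b < 1 → (∀ i < k, (lorenzGlue fm fp)^[i] b ≠ 0) → b < b₁) ∧
      ((∃ i < k, (lorenzGlue fm fp)^[i] a = 0) → a₁ = a) ∧
      (-1 < a → (∀ i < k, (lorenzGlue fm fp)^[i] a ≠ 0) → a₁ < a) := by
  set f := lorenzGlue fm fp with hf
  have hAfin := cutSet_finite hF k
  set A := cutSet f k with hA
  set TB : Set ℝ := {1} ∪ (A ∩ Icc b 1) with hTB
  set TA : Set ℝ := {-1} ∪ (A ∩ Icc (-1) a) with hTA
  have hTBfin : TB.Finite := (hAfin.inter_of_left _).union (finite_singleton 1) |>.subset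
      (by rw [hTB]; exact union_subset (subset_union_right) (subset_union_left))
  have hTAfin : TA.Finite := (hAfin.inter_of_left _).union (finite_singleton (-1)) |>.subset
      (by rw [hTA]; exact union_subset (subset_union_right) (subset_union_left))
  have hTBne : TB.Nonempty := ⟨1, Or.inl rfl⟩
  have hTAne : TA.Nonempty := ⟨-1, Or.inl rfl⟩
  set b₁ := sInf TB with hb₁
  set a₁ := sSup TA with ha₁
  have hb₁mem : b₁ ∈ TB := hTBne.csInf_mem hTBfin
  have ha₁mem : a₁ ∈ TA := hTAne.csSup_mem hTAfin
  have hblb : ∀ t ∈ TB, b ≤ t := by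
    rintro t (rfl | ⟨_, ht⟩)
    · exact hb
    · exact ht.1
  have haub : ∀ t ∈ TA, t ≤ a := by
    rintro t (rfl | ⟨_, ht⟩)
    · exact ha
    · exact ht.2
  have hbb₁ : b ≤ b₁ := hblb _ hb₁mem
  have haa₁ : a₁ ≤ a := haub _ ha₁mem
  have hb₁1 : b₁ ≤ 1 := by
    rcases hb₁mem with h1 | ⟨_, h⟩
    · exact (mem_singleton_iff.1 h1).le
    · exact h.2
  have ha₁1 : -1 ≤ a₁ := by
    rcases ha₁mem with h1 | ⟨_, h⟩
    · exact (mem_singleton_iff.1 h1).ge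
    · exact h.1
  have hnc1 : noCut f k (Ioo a₁ b₁) := by
    intro x hx i hik hx0
    have hxI : x ∈ Icc (-1) 1 := ⟨le_trans ha₁1 hx.1.le, le_trans hx.2.le hb₁1⟩
    have hxA : x ∈ A := ⟨hxI, i, hik, hx0⟩
    rcases le_or_gt x a with hxa | hxa
    · exact absurd (le_csSup hTAfin.bddAbove (Or.inr ⟨hxA, hxI.1, hxa⟩)) (not_le.2 hx.1)
    · rcases lt_or_ge x b with hxb | hxb
      · exact hnc x ⟨hxa, hxb⟩ i hik hx0
      · exact absurd (csInf_le hTBfin.bddBelow (Or.inr ⟨hxA, hxb, hxI.2⟩)) (not_le.2 hx.2)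
  have hbr : IsBranch f k a₁ b₁ := by
    refine ⟨ha₁1, lt_of_le_of_lt haa₁ (lt_of_lt_of_le hab hbb₁), hb₁1, hnc1, ?_⟩
    intro a' b' ha' hb' ha'a hb'b hnc'
    constructor
    · by_contra hne
      have hlt : a' < a₁ := lt_of_le_of_ne ha'a hne
      rcases ha₁mem with h1 | ⟨hA1, hI1⟩
      · rw [mem_singleton_iff] at h1
        exact absurd ha' (not_le.2 (h1 ▸ hlt))
      · obtain ⟨_, i, hik, hx0⟩ := hA1
        exact hnc' a₁ ⟨hlt, lt_of_le_of_lt haa₁ (lt_of_lt_of_le hab (le_trans hbb₁ hb'b))⟩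
          i hik hx0
    · by_contra hne
      have hlt : b₁ < b' := lt_of_le_of_ne hb'b (Ne.symm hne)
      rcases hb₁mem with h1 | ⟨hA1, hI1⟩
      · rw [mem_singleton_iff] at h1
        exact absurd hb' (not_le.2 (h1 ▸ hlt))
      · obtain ⟨_, i, hik, hx0⟩ := hA1
        exact hnc' b₁ ⟨lt_of_le_of_lt (le_trans ha'a haa₁) (lt_of_lt_of_le hab hbb₁), hlt⟩
          i hik hx0
  refine ⟨a₁, b₁, haa₁, hbb₁, hbr, ?_, ?_, ?_, ?_⟩
  · rintro ⟨i, hik, hib⟩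
    have hbA : b ∈ TB :=
      Or.inr ⟨⟨⟨le_trans ha₁1 (le_trans haa₁ hab.le), hb⟩, i, hik, hib⟩, le_refl b, hb⟩
    exact le_antisymm (csInf_le hTBfin.bddBelow hbA) hbb₁
  · intro hb1 hnz
    rcases lt_or_eq_of_le hbb₁ with h | h
    · exact h
    · rcases hb₁mem with h1 | ⟨hA1, hI1⟩
      · rw [← h] at h1; exact absurd h1 hb1.ne
      · rw [← h] at hA1
        obtain ⟨_, i, hik, hx0⟩ := hA1
        exact absurd hx0 (hnz i hik)
  · rintro ⟨i, hik, hia⟩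
    have haA : a ∈ TA :=
      Or.inr ⟨⟨⟨ha, le_trans hab.le (le_trans hbb₁ hb₁1)⟩, i, hik, hia⟩, ha, le_refl a⟩
    exact le_antisymm haa₁ (le_csSup hTAfin.bddAbove haA)
  · intro ha1 hnz
    rcases lt_or_eq_of_le haa₁ with h | h
    · exact h
    · rcases ha₁mem with h1 | ⟨hA1, hI1⟩
      · rw [h] at h1; exact absurd h1.symm ha1.ne
      · rw [h] at hA1
        obtain ⟨_, i, hik, hx0⟩ := hA1
        exact absurd hx0 (hnz i hik)

/-- The right endpoint of a branch is a cut point, unless it is `1`. -/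
lemma branch_right_cut (hF : IsLorenzPair fm fp) {k : ℕ} {c d : ℝ}
    (hbr : IsBranch (lorenzGlue fm fp) k c d) (hd : d < 1) :
    ∃ i < k, (lorenzGlue fm fp)^[i] d = 0 := by
  set f := lorenzGlue fm fp with hf
  by_contra hcon
  push_neg at hcon
  obtain ⟨hc1, hcd, hd1, hnc, hmax⟩ := hbr
  have hAfin := cutSet_finite hF k
  set A := cutSet f k with hA
  have hdA : d ∉ A := fun ⟨_, i, hik, h0⟩ => hcon i hik h0
  set T : Set ℝ := {1} ∪ (A ∩ Icc d 1) with hT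
  have hTfin : T.Finite := (hAfin.inter_of_left _).union (finite_singleton 1) |>.subset
      (by rw [hT]; exact union_subset (subset_union_right) (subset_union_left))
  have hTne : T.Nonempty := ⟨1, Or.inl rfl⟩
  set e := sInf T with he
  have hemem : e ∈ T := hTne.csInf_mem hTfin
  have hde : d < e := by
    rcases hemem with h1 | ⟨hA1, hI1⟩
    · exact h1 ▸ hd
    · exact lt_of_le_of_ne hI1.1 (fun hh => hdA (hh ▸ hA1))
  have he1 : e ≤ 1 := by
    rcases hemem with h1 | ⟨_, hI1⟩
    · exact h1.le
    · exact hI1.2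
  have hnc' : noCut f k (Ioo c e) := by
    intro x hx i hik hx0
    rcases lt_trichotomy x d with hxd | rfl | hxd
    · exact hnc x ⟨hx.1, hxd⟩ i hik hx0
    · exact hcon i hik hx0
    · have hxI : x ∈ Icc (-1) 1 := ⟨le_trans hc1 hx.1.le, le_trans hx.2.le he1⟩
      exact absurd (csInf_le hTfin.bddBelow (Or.inr ⟨⟨hxI, i, hik, hx0⟩, hxd.le, hxI.2⟩))
        (not_le.2 hx.2)
  exact absurd ((hmax c e hc1 he1 (le_refl c) hde.le hnc').2) hde.ne'

/-- The left endpoint of a branch is a cut point, unless it is `-1`. -/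
lemma branch_left_cut (hF : IsLorenzPair fm fp) {k : ℕ} {c d : ℝ}
    (hbr : IsBranch (lorenzGlue fm fp) k c d) (hc : -1 < c) :
    ∃ i < k, (lorenzGlue fm fp)^[i] c = 0 := by
  set f := lorenzGlue fm fp with hf
  by_contra hcon
  push_neg at hcon
  obtain ⟨hc1, hcd, hd1, hnc, hmax⟩ := hbr
  have hAfin := cutSet_finite hF k
  set A := cutSet f k with hA
  have hcA : c ∉ A := fun ⟨_, i, hik, h0⟩ => hcon i hik h0
  set T : Set ℝ := {-1} ∪ (A ∩ Icc (-1) c) with hT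
  have hTfin : T.Finite := (hAfin.inter_of_left _).union (finite_singleton (-1)) |>.subset
      (by rw [hT]; exact union_subset (subset_union_right) (subset_union_left))
  have hTne : T.Nonempty := ⟨-1, Or.inl rfl⟩
  set e := sSup T with he
  have hemem : e ∈ T := hTne.csSup_mem hTfin
  have hce : e < c := by
    rcases hemem with h1 | ⟨hA1, hI1⟩
    · exact h1 ▸ hc
    · exact lt_of_le_of_ne hI1.2 (fun hh => hcA (hh ▸ hA1))
  have he1 : -1 ≤ e := by
    rcases hemem with h1 | ⟨_, hI1⟩
    · exact h1.ge
    · exact hI1.1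
  have hnc' : noCut f k (Ioo e d) := by
    intro x hx i hik hx0
    rcases lt_trichotomy x c with hxc | rfl | hxc
    · have hxI : x ∈ Icc (-1) 1 := ⟨le_trans he1 hx.1.le, le_trans hx.2.le hd1⟩
      exact absurd (le_csSup hTfin.bddAbove (Or.inr ⟨⟨hxI, i, hik, hx0⟩, hxI.1, hxc.le⟩))
        (not_le.2 hx.1)
    · exact hcon i hik hx0
    · exact hnc x ⟨hxc, hx.2⟩ i hik hx0
  exact absurd ((hmax e d he1 hd1 hce.le (le_refl d) hnc').1) hce.ne

lemma critNeg_succ {j : ℕ} (hj : 1 ≤ j) :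
    critNeg fm fp (j+1) = lorenzGlue fm fp (critNeg fm fp j) := by
  obtain ⟨t, rfl⟩ := Nat.exists_eq_add_of_le hj
  rw [Nat.add_comm 1 t]
  show (lorenzGlue fm fp)^[t+1] (fm 0) = lorenzGlue fm fp ((lorenzGlue fm fp)^[t] (fm 0))
  rw [Function.iterate_succ_apply']

lemma critPos_succ {j : ℕ} (hj : 1 ≤ j) :
    critPos fm fp (j+1) = lorenzGlue fm fp (critPos fm fp j) := by
  obtain ⟨t, rfl⟩ := Nat.exists_eq_add_of_le hj
  rw [Nat.add_comm 1 t]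
  show (lorenzGlue fm fp)^[t+1] (fp 0) = lorenzGlue fm fp ((lorenzGlue fm fp)^[t] (fp 0))
  rw [Function.iterate_succ_apply']

/-- The constant sequences at the fixed endpoints. -/
lemma seq_of_one (hF : IsLorenzPair fm fp)
    (ha : -1 ≤ a) (hab : a < (1:ℝ))
    (hw : HasWord (lorenzGlue fm fp) k a 1 w) :
    ∀ i < k, lseq fm fp w 1 i = 1 := by
  intro i
  induction i with
  | zero => intro _; rfl
  | succ i ih =>
    intro hik
    have hik' : i < k := Nat.lt_of_succ_lt hik
    have h1 : lseq fm fp w 1 i = 1 := ih hik'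
    have hwi : w i = true := (seq_sign_sup hF ha hab le_rfl hw i hik').1 (by rw [h1]; norm_num)
    show (if w i then fp else fm) (lseq fm fp w 1 i) = 1
    rw [hwi, if_pos rfl, h1]
    exact hF.2.2.2.2.2.2.2

lemma seq_of_neg_one (hF : IsLorenzPair fm fp)
    (hab : (-1:ℝ) < b) (hb : b ≤ 1)
    (hw : HasWord (lorenzGlue fm fp) k (-1) b w) :
    ∀ i < k, lseq fm fp w (-1) i = -1 := by
  intro i
  induction i with
  | zero => intro _; rfl
  | succ i ih =>
    intro hik
    have hik' : i < k := Nat.lt_of_succ_lt hik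
    have h1 : lseq fm fp w (-1) i = -1 := ih hik'
    have hwi : w i = false := (seq_sign_inf hF le_rfl hab hb hw i hik').1 (by rw [h1]; norm_num)
    show (if w i then fp else fm) (lseq fm fp w (-1) i) = -1
    rw [hwi, if_neg Bool.false_ne_true, h1]
    exact hF.2.2.2.2.2.2.1

section TwoSystems

variable {gm gp h : ℝ → ℝ} {n : ℕ}

/-- Synchronization of the first zeros of the symbolic sup-orbits. -/
lemma zero_sync_sup (hF : IsLorenzPair fm fp) (hG : IsLorenzPair gm gp)
    (hmono : StrictMonoOn h (Icc (-1) 1)) (hm1 : h (-1) = -1) (h1 : h 1 = 1)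
    (hbranch : ∀ k ≤ n, ∀ a b : ℝ, IsBranch (lorenzGlue fm fp) k a b →
      IsBranch (lorenzGlue gm gp) k (h a) (h b))
    {k : ℕ} (hkn : k ≤ n) {a b : ℝ} {w : ℕ → Bool}
    (hbr : IsBranch (lorenzGlue fm fp) k a b)
    (hw : HasWord (lorenzGlue fm fp) k a b w)
    (hbrg : IsBranch (lorenzGlue gm gp) k (h a) (h b))
    (hwg : HasWord (lorenzGlue gm gp) k (h a) (h b) w)
    {i : ℕ} (hik : i < k)
    (hfz : ∀ j < i, lseq fm fp w b j ≠ 0) (hgz : ∀ j < i, lseq gm gp w (h b) j ≠ 0) :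
    (lseq fm fp w b i = 0 ↔ lseq gm gp w (h b) i = 0) := by
  obtain ⟨ha1, hab, hb1, hnc, _⟩ := hbr
  obtain ⟨hga1, hgab, hgb1, hgnc, _⟩ := hbrg
  have haI : a ∈ Icc (-1) 1 := ⟨ha1, le_trans hab.le hb1⟩
  have hbI : b ∈ Icc (-1) 1 := ⟨le_trans ha1 hab.le, hb1⟩
  constructor
  · intro hMf
    -- `b < 1`
    have hblt : b < 1 := by
      rcases lt_or_eq_of_le hb1 with hlt | rfl
      · exact hlt
      · exact absurd hMf (by rw [seq_of_one hF ha1 hab hw i hik]; norm_num)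
    -- `b` is a cut point of order `i`
    have hfb0 : (lorenzGlue fm fp)^[i] b = 0 := by
      rw [orbit_eq_seq_sup hF ha1 hab hb1 hw i hik.le hfz]; exact hMf
    -- extend `(a,b)` to a branch of `f^(i+1)` with right endpoint `b`
    have hnc' : noCut (lorenzGlue fm fp) (i+1) (Ioo a b) :=
      fun x hx j hj => hnc x hx j (lt_of_lt_of_le hj (Nat.succ_le_of_lt hik))
    obtain ⟨a₁, b₁, ha₁a, hbb₁, hbr₁, hbeq, _, _, _⟩ := extend_branch hF ha1 hab hb1 hnc'
    have hb₁b : b₁ = b := hbeq ⟨i, Nat.lt_succ_self i, hfb0⟩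
    rw [hb₁b] at hbr₁
    -- transfer to `g` and use that `h b` must be a cut point
    have hbrg₁ : IsBranch (lorenzGlue gm gp) (i+1) (h a₁) (h b) :=
      hbranch (i+1) (le_trans (Nat.succ_le_of_lt hik) hkn) a₁ b hbr₁
    have hhb1 : h b < 1 := by
      rw [← h1]; exact hmono hbI ⟨by norm_num, le_refl 1⟩ hblt
    obtain ⟨j, hji, hgj0⟩ := branch_right_cut hG hbrg₁ hhb1
    have hj_le : j ≤ i := Nat.lt_succ_iff.1 hji
    have : lseq gm gp w (h b) j = 0 := by
      rw [← orbit_eq_seq_sup hG hga1 hgab hgb1 hwg j (le_trans hj_le hik.le)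
        (fun j' hj' => hgz j' (lt_of_lt_of_le hj' hj_le))]
      exact hgj0
    rcases lt_or_eq_of_le hj_le with hlt | rfl
    · exact absurd this (hgz j hlt)
    · exact this
  · intro hMg
    by_contra hMf
    have hfz' : ∀ j < i + 1, lseq fm fp w b j ≠ 0 := by
      intro j hj
      rcases lt_or_eq_of_le (Nat.lt_succ_iff.1 hj) with hlt | rfl
      · exact hfz j hlt
      · exact hMf
    have hblt : b < 1 := by
      rcases lt_or_eq_of_le hb1 with hlt | rfl
      · exact hlt
      · exfalso
        rw [h1] at hgab hwg hMg
        rw [seq_of_one hG hga1 hgab hwg i hik] at hMg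
        norm_num at hMg
    have horb : ∀ j < i + 1, (lorenzGlue fm fp)^[j] b ≠ 0 := by
      intro j hj
      rw [orbit_eq_seq_sup hF ha1 hab hb1 hw j (le_trans (Nat.lt_succ_iff.1 hj) hik.le)
        (fun j' hj' => hfz' j' (lt_trans hj' hj))]
      exact hfz' j hj
    have hnc' : noCut (lorenzGlue fm fp) (i+1) (Ioo a b) :=
      fun x hx j hj => hnc x hx j (lt_of_lt_of_le hj (Nat.succ_le_of_lt hik))
    obtain ⟨a₁, b₁, ha₁a, hbb₁, hbr₁, _, hbgt, _, _⟩ := extend_branch hF ha1 hab hb1 hnc'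
    have hbb₁' : b < b₁ := hbgt hblt horb
    have hbrg₁ : IsBranch (lorenzGlue gm gp) (i+1) (h a₁) (h b₁) :=
      hbranch (i+1) (le_trans (Nat.succ_le_of_lt hik) hkn) a₁ b₁ hbr₁
    have ha₁I : a₁ ∈ Icc (-1) 1 := ⟨hbr₁.1, le_trans ha₁a haI.2⟩
    have hb₁I : b₁ ∈ Icc (-1) 1 := ⟨le_trans hbI.1 hbb₁, hbr₁.2.2.1⟩
    have hmem : h b ∈ Ioo (h a₁) (h b₁) :=
      ⟨hmono ha₁I hbI (lt_of_le_of_lt ha₁a hab), hmono hbI hb₁I hbb₁'⟩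
    refine hbrg₁.2.2.2.1 (h b) hmem i (Nat.lt_succ_self i) ?_
    rw [orbit_eq_seq_sup hG hga1 hgab hgb1 hwg i hik.le hgz]
    exact hMg

/-- Synchronization of the first zeros of the symbolic inf-orbits. -/
lemma zero_sync_inf (hF : IsLorenzPair fm fp) (hG : IsLorenzPair gm gp)
    (hmono : StrictMonoOn h (Icc (-1) 1)) (hm1 : h (-1) = -1) (h1 : h 1 = 1)
    (hbranch : ∀ k ≤ n, ∀ a b : ℝ, IsBranch (lorenzGlue fm fp) k a b →
      IsBranch (lorenzGlue gm gp) k (h a) (h b))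
    {k : ℕ} (hkn : k ≤ n) {a b : ℝ} {w : ℕ → Bool}
    (hbr : IsBranch (lorenzGlue fm fp) k a b)
    (hw : HasWord (lorenzGlue fm fp) k a b w)
    (hbrg : IsBranch (lorenzGlue gm gp) k (h a) (h b))
    (hwg : HasWord (lorenzGlue gm gp) k (h a) (h b) w)
    {i : ℕ} (hik : i < k)
    (hfz : ∀ j < i, lseq fm fp w a j ≠ 0) (hgz : ∀ j < i, lseq gm gp w (h a) j ≠ 0) :
    (lseq fm fp w a i = 0 ↔ lseq gm gp w (h a) i = 0) := by
  obtain ⟨ha1, hab, hb1, hnc, _⟩ := hbr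
  obtain ⟨hga1, hgab, hgb1, hgnc, _⟩ := hbrg
  have haI : a ∈ Icc (-1) 1 := ⟨ha1, le_trans hab.le hb1⟩
  have hbI : b ∈ Icc (-1) 1 := ⟨le_trans ha1 hab.le, hb1⟩
  constructor
  · intro hNf
    have halt : -1 < a := by
      rcases lt_or_eq_of_le ha1 with hlt | rfl
      · exact hlt
      · exact absurd hNf (by rw [seq_of_neg_one hF hab hb1 hw i hik]; norm_num)
    have hfa0 : (lorenzGlue fm fp)^[i] a = 0 := by
      rw [orbit_eq_seq_inf hF ha1 hab hb1 hw i hik.le]; exact hNf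
    have hnc' : noCut (lorenzGlue fm fp) (i+1) (Ioo a b) :=
      fun x hx j hj => hnc x hx j (lt_of_lt_of_le hj (Nat.succ_le_of_lt hik))
    obtain ⟨a₁, b₁, ha₁a, hbb₁, hbr₁, _, _, haeq, _⟩ := extend_branch hF ha1 hab hb1 hnc'
    have ha₁a' : a₁ = a := haeq ⟨i, Nat.lt_succ_self i, hfa0⟩
    rw [ha₁a'] at hbr₁
    have hbrg₁ : IsBranch (lorenzGlue gm gp) (i+1) (h a) (h b₁) :=
      hbranch (i+1) (le_trans (Nat.succ_le_of_lt hik) hkn) a b₁ hbr₁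
    have hha1 : -1 < h a := by
      rw [← hm1]; exact hmono ⟨le_refl (-1), by norm_num⟩ haI halt
    obtain ⟨j, hji, hgj0⟩ := branch_left_cut hG hbrg₁ hha1
    have hj_le : j ≤ i := Nat.lt_succ_iff.1 hji
    have : lseq gm gp w (h a) j = 0 := by
      rw [← orbit_eq_seq_inf hG hga1 hgab hgb1 hwg j (le_trans hj_le hik.le)]
      exact hgj0
    rcases lt_or_eq_of_le hj_le with hlt | rfl
    · exact absurd this (hgz j hlt)
    · exact this
  · intro hNg
    by_contra hNf
    have hfz' : ∀ j < i + 1, lseq fm fp w a j ≠ 0 := by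
      intro j hj
      rcases lt_or_eq_of_le (Nat.lt_succ_iff.1 hj) with hlt | rfl
      · exact hfz j hlt
      · exact hNf
    have halt : -1 < a := by
      rcases lt_or_eq_of_le ha1 with hlt | rfl
      · exact hlt
      · exfalso
        rw [hm1] at hgab hwg hNg
        rw [seq_of_neg_one hG hgab hgb1 hwg i hik] at hNg
        norm_num at hNg
    have horb : ∀ j < i + 1, (lorenzGlue fm fp)^[j] a ≠ 0 := by
      intro j hj
      rw [orbit_eq_seq_inf hF ha1 hab hb1 hw j (le_trans (Nat.lt_succ_iff.1 hj) hik.le)]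
      exact hfz' j hj
    have hnc' : noCut (lorenzGlue fm fp) (i+1) (Ioo a b) :=
      fun x hx j hj => hnc x hx j (lt_of_lt_of_le hj (Nat.succ_le_of_lt hik))
    obtain ⟨a₁, b₁, ha₁a, hbb₁, hbr₁, _, _, _, hagt⟩ := extend_branch hF ha1 hab hb1 hnc'
    have haa₁' : a₁ < a := hagt halt horb
    have hbrg₁ : IsBranch (lorenzGlue gm gp) (i+1) (h a₁) (h b₁) :=
      hbranch (i+1) (le_trans (Nat.succ_le_of_lt hik) hkn) a₁ b₁ hbr₁
    have ha₁I : a₁ ∈ Icc (-1) 1 := ⟨hbr₁.1, le_trans ha₁a haI.2⟩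
    have hb₁I : b₁ ∈ Icc (-1) 1 := ⟨le_trans hbI.1 hbb₁, hbr₁.2.2.1⟩
    have hmem : h a ∈ Ioo (h a₁) (h b₁) :=
      ⟨hmono ha₁I haI haa₁', hmono haI hb₁I (lt_of_lt_of_le hab hbb₁)⟩
    refine hbrg₁.2.2.2.1 (h a) hmem i (Nat.lt_succ_self i) ?_
    rw [orbit_eq_seq_inf hG hga1 hgab hgb1 hwg i hik.le]
    exact hNg

/-- Main comparison invariant for the sup-orbits. -/
lemma invariant_sup (hF : IsLorenzPair fm fp) (hG : IsLorenzPair gm gp)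
    (hKneg : ∀ i ≤ n, (0 < critNeg fm fp i ↔ 0 < critNeg gm gp i) ∧
      (critNeg fm fp i = 0 ↔ critNeg gm gp i = 0))
    (hmono : StrictMonoOn h (Icc (-1) 1)) (hm1 : h (-1) = -1) (h1 : h 1 = 1)
    (hbranch : ∀ k ≤ n, ∀ a b : ℝ, IsBranch (lorenzGlue fm fp) k a b →
      IsBranch (lorenzGlue gm gp) k (h a) (h b))
    {k : ℕ} (hkn : k ≤ n) {a b : ℝ} {w : ℕ → Bool}
    (hbr : IsBranch (lorenzGlue fm fp) k a b)
    (hw : HasWord (lorenzGlue fm fp) k a b w)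
    (hbrg : IsBranch (lorenzGlue gm gp) k (h a) (h b))
    (hwg : HasWord (lorenzGlue gm gp) k (h a) (h b) w) :
    ∀ i < k, ((∀ j ≤ i, lseq fm fp w b j ≠ 0 ∧ lseq gm gp w (h b) j ≠ 0) ∨
      (∃ z ≤ i, lseq fm fp w b i = critNeg fm fp (i-z) ∧
        lseq gm gp w (h b) i = critNeg gm gp (i-z))) := by
  have hsyncgen := fun (i : ℕ) (hik : i < k) hfz hgz => zero_sync_sup hF hG hmono hm1 h1
    hbranch hkn hbr hw hbrg hwg hik hfz hgz
  have hsignf := seq_sign_sup hF hbr.1 hbr.2.1 hbr.2.2.1 hw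
  intro i
  induction i with
  | zero =>
    intro hk
    have hsync := hsyncgen 0 hk (by intro j hj; omega) (by intro j hj; omega)
    by_cases h0 : lseq fm fp w b 0 = 0
    · right
      exact ⟨0, le_refl 0, by simpa [critNeg] using h0, by simpa [critNeg] using hsync.1 h0⟩
    · left
      intro j hj
      rw [Nat.le_zero.1 hj]
      exact ⟨h0, fun hg => h0 (hsync.2 hg)⟩
  | succ i ih =>
    intro hik
    have hik' : i < k := Nat.lt_of_succ_lt hik
    rcases ih hik' with hL | ⟨z, hz, hMf, hMg⟩
    · have hsync := hsyncgen (i+1) hik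
        (fun j hj => (hL j (Nat.lt_succ_iff.1 hj)).1)
        (fun j hj => (hL j (Nat.lt_succ_iff.1 hj)).2)
      by_cases h0 : lseq fm fp w b (i+1) = 0
      · right
        refine ⟨i+1, le_refl _, ?_, ?_⟩
        · simpa [critNeg] using h0
        · simpa [critNeg] using hsync.1 h0
      · left
        intro j hj
        rcases lt_or_eq_of_le hj with hlt | rfl
        · exact hL j (Nat.lt_succ_iff.1 hlt)
        · exact ⟨h0, fun hg => h0 (hsync.2 hg)⟩
    · set jz := i - z with hjz
      have hjn : jz ≤ n := le_trans (Nat.sub_le i z) (le_trans hik'.le hkn)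
      rcases lt_trichotomy (lseq fm fp w b i) 0 with hneg | hzero | hpos
      · -- negative value: follow the glued maps
        have hwi : w i = false := by
          rcases Bool.eq_false_or_eq_true (w i) with hh | hh
          · exact absurd ((hsignf i hik').2 hh) (asymm hneg)
          · exact hh
        have hjz1 : 1 ≤ jz := by
          rcases Nat.eq_zero_or_pos jz with hh | hh
          · rw [hh] at hMf
            exact absurd hMf (by simp [critNeg]; exact hneg.ne)
          · exact hh
        have hcgneg : critNeg gm gp jz < 0 := by
          have hcf : critNeg fm fp jz < 0 := hMf ▸ hneg
          rcases lt_trichotomy (critNeg gm gp jz) 0 with hh | hh | hh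
          · exact hh
          · exact absurd ((hKneg jz hjn).2.2 hh) (hMf ▸ hneg.ne)
          · exact absurd ((hKneg jz hjn).1.2 hh) (asymm hcf)
        right
        refine ⟨z, le_trans hz (Nat.le_succ i), ?_, ?_⟩
        · show (if w i then fp else fm) (lseq fm fp w b i) = critNeg fm fp (i+1-z)
          rw [hwi, if_neg Bool.false_ne_true, hMf, ← glue_neg (fm:=fm) (fp:=fp) (hMf ▸ hneg),
            ← critNeg_succ hjz1]
          congr 1
          omega
        · show (if w i then gp else gm) (lseq gm gp w (h b) i) = critNeg gm gp (i+1-z)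
          rw [hwi, if_neg Bool.false_ne_true, hMg, ← glue_neg (fm:=gm) (fp:=gp) hcgneg, ← critNeg_succ hjz1]
          congr 1
          omega
      · -- zero value: restart with the left critical orbit
        have hwi : w i = false := by
          rcases Bool.eq_false_or_eq_true (w i) with hh | hh
          · exact absurd ((hsignf i hik').2 hh) (by rw [hzero]; exact lt_irrefl 0)
          · exact hh
        have hcg0 : lseq gm gp w (h b) i = 0 := by
          rw [hMg]
          exact (hKneg jz hjn).2.1 (hMf.symm.trans hzero)
        right
        refine ⟨i, Nat.le_succ i, ?_, ?_⟩
        · show (if w i then fp else fm) (lseq fm fp w b i) = critNeg fm fp (i+1-i)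
          rw [hwi, if_neg Bool.false_ne_true, hzero]
          have : i + 1 - i = 1 := by omega
          rw [this]
          rfl
        · show (if w i then gp else gm) (lseq gm gp w (h b) i) = critNeg gm gp (i+1-i)
          rw [hwi, if_neg Bool.false_ne_true, hcg0]
          have : i + 1 - i = 1 := by omega
          rw [this]
          rfl
      · -- positive value
        have hwi : w i = true := (hsignf i hik').1 hpos
        have hjz1 : 1 ≤ jz := by
          rcases Nat.eq_zero_or_pos jz with hh | hh
          · rw [hh] at hMf
            exact absurd hMf (by simp [critNeg]; exact hpos.ne')
          · exact hh
        have hcgpos : 0 < critNeg gm gp jz := (hKneg jz hjn).1.1 (hMf ▸ hpos)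
        right
        refine ⟨z, le_trans hz (Nat.le_succ i), ?_, ?_⟩
        · show (if w i then fp else fm) (lseq fm fp w b i) = critNeg fm fp (i+1-z)
          rw [hwi, if_pos rfl, hMf, ← glue_nonneg (fm:=fm) (fp:=fp) (le_of_lt (hMf ▸ hpos)),
            ← critNeg_succ hjz1]
          congr 1
          omega
        · show (if w i then gp else gm) (lseq gm gp w (h b) i) = critNeg gm gp (i+1-z)
          rw [hwi, if_pos rfl, hMg, ← glue_nonneg (fm:=gm) (fp:=gp) hcgpos.le, ← critNeg_succ hjz1]
          congr 1
          omega

/-- Main comparison invariant for the inf-orbits. -/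
lemma invariant_inf (hF : IsLorenzPair fm fp) (hG : IsLorenzPair gm gp)
    (hKpos : ∀ i ≤ n, (0 < critPos fm fp i ↔ 0 < critPos gm gp i) ∧
      (critPos fm fp i = 0 ↔ critPos gm gp i = 0))
    (hmono : StrictMonoOn h (Icc (-1) 1)) (hm1 : h (-1) = -1) (h1 : h 1 = 1)
    (hbranch : ∀ k ≤ n, ∀ a b : ℝ, IsBranch (lorenzGlue fm fp) k a b →
      IsBranch (lorenzGlue gm gp) k (h a) (h b))
    {k : ℕ} (hkn : k ≤ n) {a b : ℝ} {w : ℕ → Bool}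
    (hbr : IsBranch (lorenzGlue fm fp) k a b)
    (hw : HasWord (lorenzGlue fm fp) k a b w)
    (hbrg : IsBranch (lorenzGlue gm gp) k (h a) (h b))
    (hwg : HasWord (lorenzGlue gm gp) k (h a) (h b) w) :
    ∀ i < k, ((∀ j ≤ i, lseq fm fp w a j ≠ 0 ∧ lseq gm gp w (h a) j ≠ 0) ∨
      (∃ z ≤ i, lseq fm fp w a i = critPos fm fp (i-z) ∧
        lseq gm gp w (h a) i = critPos gm gp (i-z))) := by
  have hsyncgen := fun (i : ℕ) (hik : i < k) hfz hgz => zero_sync_inf hF hG hmono hm1 h1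
    hbranch hkn hbr hw hbrg hwg hik hfz hgz
  have hsignf := seq_sign_inf hF hbr.1 hbr.2.1 hbr.2.2.1 hw
  intro i
  induction i with
  | zero =>
    intro hk
    have hsync := hsyncgen 0 hk (by intro j hj; omega) (by intro j hj; omega)
    by_cases h0 : lseq fm fp w a 0 = 0
    · right
      exact ⟨0, le_refl 0, by simpa [critPos] using h0, by simpa [critPos] using hsync.1 h0⟩
    · left
      intro j hj
      rw [Nat.le_zero.1 hj]
      exact ⟨h0, fun hg => h0 (hsync.2 hg)⟩
  | succ i ih =>
    intro hik
    have hik' : i < k := Nat.lt_of_succ_lt hik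
    rcases ih hik' with hL | ⟨z, hz, hMf, hMg⟩
    · have hsync := hsyncgen (i+1) hik
        (fun j hj => (hL j (Nat.lt_succ_iff.1 hj)).1)
        (fun j hj => (hL j (Nat.lt_succ_iff.1 hj)).2)
      by_cases h0 : lseq fm fp w a (i+1) = 0
      · right
        refine ⟨i+1, le_refl _, ?_, ?_⟩
        · simpa [critPos] using h0
        · simpa [critPos] using hsync.1 h0
      · left
        intro j hj
        rcases lt_or_eq_of_le hj with hlt | rfl
        · exact hL j (Nat.lt_succ_iff.1 hlt)
        · exact ⟨h0, fun hg => h0 (hsync.2 hg)⟩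
    · set jz := i - z with hjz
      have hjn : jz ≤ n := le_trans (Nat.sub_le i z) (le_trans hik'.le hkn)
      rcases lt_trichotomy (lseq fm fp w a i) 0 with hneg | hzero | hpos
      · have hwi : w i = false := (hsignf i hik').1 hneg
        have hjz1 : 1 ≤ jz := by
          rcases Nat.eq_zero_or_pos jz with hh | hh
          · rw [hh] at hMf
            exact absurd hMf (by simp [critPos]; exact hneg.ne)
          · exact hh
        have hcgneg : critPos gm gp jz < 0 := by
          have hcf : critPos fm fp jz < 0 := hMf ▸ hneg
          rcases lt_trichotomy (critPos gm gp jz) 0 with hh | hh | hh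
          · exact hh
          · exact absurd ((hKpos jz hjn).2.2 hh) (hMf ▸ hneg.ne)
          · exact absurd ((hKpos jz hjn).1.2 hh) (asymm hcf)
        right
        refine ⟨z, le_trans hz (Nat.le_succ i), ?_, ?_⟩
        · show (if w i then fp else fm) (lseq fm fp w a i) = critPos fm fp (i+1-z)
          rw [hwi, if_neg Bool.false_ne_true, hMf, ← glue_neg (fm:=fm) (fp:=fp) (hMf ▸ hneg),
            ← critPos_succ hjz1]
          congr 1
          omega
        · show (if w i then gp else gm) (lseq gm gp w (h a) i) = critPos gm gp (i+1-z)
          rw [hwi, if_neg Bool.false_ne_true, hMg, ← glue_neg (fm:=gm) (fp:=gp) hcgneg, ← critPos_succ hjz1]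
          congr 1
          omega
      · -- zero value: restart with the right critical orbit
        have hwi : w i = true := by
          rcases Bool.eq_false_or_eq_true (w i) with hh | hh
          · exact hh
          · exact absurd ((hsignf i hik').2 hh) (by rw [hzero]; exact lt_irrefl 0)
        have hcg0 : lseq gm gp w (h a) i = 0 := by
          rw [hMg]
          exact (hKpos jz hjn).2.1 (hMf.symm.trans hzero)
        right
        refine ⟨i, Nat.le_succ i, ?_, ?_⟩
        · show (if w i then fp else fm) (lseq fm fp w a i) = critPos fm fp (i+1-i)
          rw [hwi, if_pos rfl, hzero]
          have : i + 1 - i = 1 := by omega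
          rw [this]
          rfl
        · show (if w i then gp else gm) (lseq gm gp w (h a) i) = critPos gm gp (i+1-i)
          rw [hwi, if_pos rfl, hcg0]
          have : i + 1 - i = 1 := by omega
          rw [this]
          rfl
      · have hwi : w i = true := by
          rcases Bool.eq_false_or_eq_true (w i) with hh | hh
          · exact hh
          · exact absurd ((hsignf i hik').2 hh) (asymm hpos)
        have hjz1 : 1 ≤ jz := by
          rcases Nat.eq_zero_or_pos jz with hh | hh
          · rw [hh] at hMf
            exact absurd hMf (by simp [critPos]; exact hpos.ne')
          · exact hh
        have hcgpos : 0 < critPos gm gp jz := (hKpos jz hjn).1.1 (hMf ▸ hpos)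
        right
        refine ⟨z, le_trans hz (Nat.le_succ i), ?_, ?_⟩
        · show (if w i then fp else fm) (lseq fm fp w a i) = critPos fm fp (i+1-z)
          rw [hwi, if_pos rfl, hMf, ← glue_nonneg (fm:=fm) (fp:=fp) (le_of_lt (hMf ▸ hpos)),
            ← critPos_succ hjz1]
          congr 1
          omega
        · show (if w i then gp else gm) (lseq gm gp w (h a) i) = critPos gm gp (i+1-z)
          rw [hwi, if_pos rfl, hMg, ← glue_nonneg (fm:=gm) (fp:=gp) hcgpos.le, ← critPos_succ hjz1]
          congr 1
          omega

end TwoSystems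

end LorenzAux

open LorenzAux in
/-- **Lemma 2.1(4), cutting times.** Let `f`, `g` be Lorenz maps with the same kneading data
up to time `n`, and let `h` be the combinatorial homeomorphism matching branches of `f^k` to
branches of `g^k` (with the same itinerary words) for `k ≤ n`. Then `h` preserves the cutting
times: for a branch `I` of `f^k` and `l < k`, `0` is the supremum (resp. infimum) of
`f^l(I)` iff it is for `g^l(h(I))`. -/
theorem cutting_times_preserved
    (fm fp gm gp : ℝ → ℝ) (hF : IsLorenzPair fm fp) (hG : IsLorenzPair gm gp) (n : ℕ)
    (hKneg : ∀ i ≤ n, (0 < critNeg fm fp i ↔ 0 < critNeg gm gp i) ∧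
      (critNeg fm fp i = 0 ↔ critNeg gm gp i = 0))
    (hKpos : ∀ i ≤ n, (0 < critPos fm fp i ↔ 0 < critPos gm gp i) ∧
      (critPos fm fp i = 0 ↔ critPos gm gp i = 0))
    (h : ℝ → ℝ) (hcont : ContinuousOn h (Icc (-1) 1)) (hmono : StrictMonoOn h (Icc (-1) 1))
    (hsurj : h '' Icc (-1) 1 = Icc (-1) 1) (hm1 : h (-1) = -1) (h1 : h 1 = 1)
    (hbranch : ∀ k ≤ n, ∀ a b : ℝ, IsBranch (lorenzGlue fm fp) k a b →
      IsBranch (lorenzGlue gm gp) k (h a) (h b) ∧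
      ∀ w : ℕ → Bool, HasWord (lorenzGlue fm fp) k a b w →
        HasWord (lorenzGlue gm gp) k (h a) (h b) w) :
    ∀ k ≤ n, ∀ a b : ℝ, IsBranch (lorenzGlue fm fp) k a b →
      (∀ l < k, IsLUB ((lorenzGlue fm fp)^[l] '' Ioo a b) 0 →
        IsLUB ((lorenzGlue gm gp)^[l] '' Ioo (h a) (h b)) 0) ∧
      (∀ r < k, IsGLB ((lorenzGlue fm fp)^[r] '' Ioo a b) 0 →
        IsGLB ((lorenzGlue gm gp)^[r] '' Ioo (h a) (h b)) 0) := by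
  intro k hkn a b hbr
  have hbranch' : ∀ k ≤ n, ∀ a b : ℝ, IsBranch (lorenzGlue fm fp) k a b →
      IsBranch (lorenzGlue gm gp) k (h a) (h b) :=
    fun k hk a b hb => (hbranch k hk a b hb).1
  constructor
  · intro l hl hlub
    have hk0 : 0 < k := lt_of_le_of_lt (Nat.zero_le l) hl
    obtain ⟨w, hw⟩ := exists_word hF hbr.1 hbr.2.1 hbr.2.2.1 hk0 hbr.2.2.2.1
    obtain ⟨hbrg, hwordg⟩ := hbranch k hkn a b hbr
    have hwg := hwordg w hw
    have hMf := (seq_isLUB hF hbr.1 hbr.2.1 hbr.2.2.1 hw l hl).1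
    have hMf0 : lseq fm fp w b l = 0 := hMf.unique hlub
    have hinv := invariant_sup hF hG hKneg hmono hm1 h1 hbranch' hkn hbr hw hbrg hwg l hl
    have hMg0 : lseq gm gp w (h b) l = 0 := by
      rcases hinv with hL | ⟨z, hz, hf, hg⟩
      · exact absurd hMf0 (hL l le_rfl).1
      · rw [hg]
        exact (hKneg (l-z) (le_trans (Nat.sub_le l z) (le_trans hl.le hkn))).2.1
          (hf.symm.trans hMf0)
    have hMg := (seq_isLUB hG hbrg.1 hbrg.2.1 hbrg.2.2.1 hwg l hl).1
    rw [hMg0] at hMg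
    exact hMg
  · intro l hl hglb
    have hk0 : 0 < k := lt_of_le_of_lt (Nat.zero_le l) hl
    obtain ⟨w, hw⟩ := exists_word hF hbr.1 hbr.2.1 hbr.2.2.1 hk0 hbr.2.2.2.1
    obtain ⟨hbrg, hwordg⟩ := hbranch k hkn a b hbr
    have hwg := hwordg w hw
    have hNf := (seq_isLUB hF hbr.1 hbr.2.1 hbr.2.2.1 hw l hl).2
    have hNf0 : lseq fm fp w a l = 0 := hNf.unique hglb
    have hinv := invariant_inf hF hG hKpos hmono hm1 h1 hbranch' hkn hbr hw hbrg hwg l hl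
    have hNg0 : lseq gm gp w (h a) l = 0 := by
      rcases hinv with hL | ⟨z, hz, hf, hg⟩
      · exact absurd hNf0 (hL l le_rfl).1
      · rw [hg]
        exact (hKpos (l-z) (le_trans (Nat.sub_le l z) (le_trans hl.le hkn))).2.1
          (hf.symm.trans hNf0)
    have hNg := (seq_isLUB hG hbrg.1 hbrg.2.1 hbrg.2.2.1 hwg l hl).2
    rw [hNg0] at hNg
    exact hNg
end
end
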